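/- Let V and W be finite-dimensional symplectic vector spaces, let Γ ⊂ V × W⁻ be a Lagrangian subspace (where W⁻ denotes W with the negated symplectic form), and let Σ ⊂ W be an isotropic subspace. Then the composition Γ∘Σ := { v ∈ V : ∃ w ∈ Σ, (v,w) ∈ Γ } is an isotropic subspace of V. -/
import Mathlib


open Module LinearMap

/-- The symplectic form `ω_V ⊕ (−ω_W)` on `V × W⁻`. -/
noncomputable def prodNegForm {V W : Type*} [AddCommGroup V] [Module ℝ V]
    [AddCommGroup W] [Module ℝ W]
    (ωV : LinearMap.BilinForm ℝ V) (ωW : LinearMap.BilinForm ℝ W) :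
    LinearMap.BilinForm ℝ (V × W) :=
  (ωV.comp (LinearMap.fst ℝ V W) (LinearMap.fst ℝ V W)) -
  (ωW.comp (LinearMap.snd ℝ V W) (LinearMap.snd ℝ V W))

/-- The composition `Γ∘Σ = { v : ∃ w ∈ Σ, (v,w) ∈ Γ }` of a linear relation `Γ ⊂ V × W`
with a subspace `Σ ⊂ W`, as a subspace of `V`. -/
noncomputable def relComp {V W : Type*} [AddCommGroup V] [Module ℝ V]
    [AddCommGroup W] [Module ℝ W]
    (Γ : Submodule ℝ (V × W)) (S : Submodule ℝ W) : Submodule ℝ V :=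
  Submodule.map (LinearMap.fst ℝ V W) (Γ ⊓ Submodule.prod ⊤ S)

/-- Let `V`, `W` be finite-dimensional symplectic vector spaces, `Γ ⊂ V × W⁻` a
Lagrangian subspace, and `Σ ⊂ W` an isotropic subspace.  Then
`Γ∘Σ = { v ∈ V : ∃ w ∈ Σ, (v,w) ∈ Γ }` is an isotropic subspace of `V`. -/
theorem relComp_isotropic
    {V W : Type*} [AddCommGroup V] [Module ℝ V] [FiniteDimensional ℝ V]
    [AddCommGroup W] [Module ℝ W] [FiniteDimensional ℝ W]
    (ωV : LinearMap.BilinForm ℝ V) (ωW : LinearMap.BilinForm ℝ W)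
    (hValt : ∀ v, ωV v v = 0) (hWalt : ∀ w, ωW w w = 0)
    (hVnd : ∀ v, (∀ v', ωV v v' = 0) → v = 0)
    (hWnd : ∀ w, (∀ w', ωW w w' = 0) → w = 0)
    (Γ : Submodule ℝ (V × W))
    (hΓiso : ∀ p ∈ Γ, ∀ q ∈ Γ, prodNegForm ωV ωW p q = 0)
    (hΓlag : 2 * finrank ℝ Γ = finrank ℝ V + finrank ℝ W)
    (S : Submodule ℝ W) (hSiso : ∀ w₁ ∈ S, ∀ w₂ ∈ S, ωW w₁ w₂ = 0) :
    ∀ v₁ ∈ relComp Γ S, ∀ v₂ ∈ relComp Γ S, ωV v₁ v₂ = 0 := by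
  rintro v₁ hv₁ v₂ hv₂
  obtain ⟨⟨x₁, w₁⟩, ⟨hΓ1, -, hS1⟩, rfl⟩ := hv₁
  obtain ⟨⟨x₂, w₂⟩, ⟨hΓ2, -, hS2⟩, rfl⟩ := hv₂
  have h := hΓiso _ hΓ1 _ hΓ2
  simp only [prodNegForm, LinearMap.sub_apply, LinearMap.BilinForm.comp_apply,
    LinearMap.fst_apply, LinearMap.snd_apply] at h
  have hw := hSiso _ hS1 _ hS2
  simp only [LinearMap.fst_apply]
  linarith [h, hw]
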